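/- arXiv:2106.05421 — 3 statements merged into one kernel-verified Lean document; each statement's English description precedes it below -/
import Mathlib

section
/- For every post-expectation E : Σ → ℝ≥0∞ and every monotone sequence of expectations X : ℕ → (Σ → ℝ≥0∞), the characteristic function commutes with countable suprema: Φ_E (⨆ n, X n) = ⨆ n, Φ_E (X n). Consequently, by the Kleene fixed-point theorem, lfp Φ_E = ⨆ n, Φ_E^[n] ⊥, where Φ_E^[n] denotes the n-fold iterate of Φ_E and ⊥ is the constant-zero expectation. -/
open ENNReal

/-- The characteristic function of the loop `while G do body` with respect to
post-expectation `E`. -/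
noncomputable def Phi {S : Type*} (G : S → Prop) [DecidablePred G] (body : S → PMF S)
    (E : S → ℝ≥0∞) (X : S → ℝ≥0∞) : S → ℝ≥0∞ :=
  fun σ => if G σ then ∑' τ, body σ τ * X τ else E σ

theorem Phi_monotone {S : Type*} (G : S → Prop) [DecidablePred G] (body : S → PMF S)
    (E : S → ℝ≥0∞) : Monotone (Phi G body E) := by
  intro X Y hXY σ
  simp only [Phi]
  split
  · exact ENNReal.tsum_le_tsum fun τ => by gcongr <;> exact hXY τ
  · exact le_rfl

/-- The characteristic function, bundled as a monotone map on the complete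
lattice of expectations. -/
noncomputable def PhiHom {S : Type*} (G : S → Prop) [DecidablePred G] (body : S → PMF S)
    (E : S → ℝ≥0∞) : (S → ℝ≥0∞) →o (S → ℝ≥0∞) :=
  ⟨Phi G body E, Phi_monotone G body E⟩

/-- The stopped `n`-step kernels of the loop `while G do body`. -/
noncomputable def mu {S : Type*} (G : S → Prop) [DecidablePred G] [DecidableEq S]
    (body : S → PMF S) : ℕ → S → S → ℝ≥0∞
  | 0 => fun σ τ => if ¬ G σ ∧ τ = σ then 1 else 0
  | n + 1 => fun σ =>
      if G σ then (fun τ => ∑' σ', body σ σ' * mu G body n σ' τ) else mu G body 0 σ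

/-- The loop's output sub-distribution. -/
noncomputable def W {S : Type*} (G : S → Prop) [DecidablePred G] [DecidableEq S]
    (body : S → PMF S) (σ τ : S) : ℝ≥0∞ :=
  ⨆ n, mu G body n σ τ


lemma tsum_iSup_of_monotone' {S : Type*} {f : ℕ → S → ℝ≥0∞} (hf : Monotone f) :
    ∑' τ, ⨆ n, f n τ = ⨆ n, ∑' τ, f n τ := by
  apply le_antisymm
  · rw [ENNReal.tsum_eq_iSup_sum]
    refine iSup_le fun s => ?_
    rw [ENNReal.finsetSum_iSup_of_monotone (fun τ i j h => hf h τ)]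
    exact iSup_mono fun n => ENNReal.sum_le_tsum s
  · exact iSup_le fun n => ENNReal.tsum_le_tsum fun τ => le_iSup (fun n => f n τ) n

lemma phi_cont {S : Type*} (G : S → Prop) [DecidablePred G] (body : S → PMF S)
    (E : S → ℝ≥0∞) (X : ℕ → S → ℝ≥0∞) (hX : Monotone X) :
    Phi G body E (⨆ n, X n) = ⨆ n, Phi G body E (X n) := by
  funext σ
  simp only [Phi, iSup_apply]
  split_ifs with h
  · simp only [ENNReal.mul_iSup]
    exact tsum_iSup_of_monotone' (f := fun n τ => body σ τ * X n τ)
      (fun i j hij τ => mul_le_mul_right (hX hij τ) _)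
  · simp

/-- the characteristic function commutes with countable suprema of
monotone sequences of expectations; consequently (Kleene fixed-point theorem)
its least fixed point is the supremum of its iterates from ⊥. -/
theorem phi_omega_continuous_and_kleene {S : Type*} [Countable S]
    (G : S → Prop) [DecidablePred G] (body : S → PMF S) (E : S → ℝ≥0∞) :
    (∀ X : ℕ → S → ℝ≥0∞, Monotone X →
      Phi G body E (⨆ n, X n) = ⨆ n, Phi G body E (X n)) ∧
    OrderHom.lfp (PhiHom G body E) = ⨆ n, (Phi G body E)^[n] ⊥ := by
  refine ⟨phi_cont G body E, ?_⟩
  have hsc : OmegaCompletePartialOrder.ωScottContinuous (PhiHom G body E) := by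
    refine OmegaCompletePartialOrder.ωScottContinuous.of_map_ωSup_of_orderHom fun c => ?_
    have h1 : OmegaCompletePartialOrder.ωSup c = ⨆ n, c n := by
      funext s; rw [iSup_apply]; rfl
    have h2 : OmegaCompletePartialOrder.ωSup (c.map (PhiHom G body E))
        = ⨆ n, Phi G body E (c n) := by
      funext s; rw [iSup_apply]; rfl
    rw [h1, h2]
    exact phi_cont G body E (fun n => c n) c.monotone
  exact fixedPoints.lfp_eq_sSup_iterate _ hsc
end

section
/- Loop unrolling for expected values: for every post-expectation E : Σ → ℝ≥0∞, every n : ℕ, and every σ : Σ, the expected value of E under the (n+1)-step stopped kernel is obtained by applying the characteristic function to the expected value under the n-step stopped kernel: ∑' τ, μ_{n+1} σ τ * E τ = Φ_E (fun σ' => ∑' τ, μ_n σ' τ * E τ) σ. -/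
open ENNReal

/-- loop unrolling for expected values under the stopped kernels. -/
theorem mu_succ_expectation {S : Type*} [Countable S] [DecidableEq S]
    (G : S → Prop) [DecidablePred G] (body : S → PMF S)
    (E : S → ℝ≥0∞) (n : ℕ) (σ : S) :
    ∑' τ, mu G body (n + 1) σ τ * E τ =
      Phi G body E (fun σ' => ∑' τ, mu G body n σ' τ * E τ) σ := by
  simp only [mu, Phi]
  split
  · simp only [← ENNReal.tsum_mul_right]
    rw [ENNReal.tsum_comm]
    congr 1; ext σ'
    rw [← ENNReal.tsum_mul_left]
    congr 1; ext τ; ring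
  · rw [tsum_eq_single σ]
    · simp_all
    · intro τ hτ; simp [hτ]
end

section
/- The least fixed point of the characteristic function with respect to the constant-one post-expectation computes the loop's termination probability: for every σ : Σ, (lfp Φ_1) σ = ∑' τ, W σ τ, where Φ_1 is the characteristic function with respect to the constant post-expectation 1. -/
open ENNReal

section Aux

open OrderHom

/-- Monotone convergence for `tsum` on `ℝ≥0∞`. -/
lemma tsum_iSup_mono {α : Type*} {f : ℕ → α → ℝ≥0∞} (hf : Monotone f) :
    ∑' a, ⨆ n, f n a = ⨆ n, ∑' a, f n a := by
  simp_rw [ENNReal.tsum_eq_iSup_sum]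
  rw [iSup_comm]
  congr 1
  funext s
  exact ENNReal.finsetSum_iSup_of_monotone fun a => fun i j hij => hf hij a

lemma mu_zero {S : Type*} (G : S → Prop) [DecidablePred G] [DecidableEq S]
    (body : S → PMF S) (σ τ : S) :
    mu G body 0 σ τ = if ¬ G σ ∧ τ = σ then 1 else 0 := by simp only [mu]

lemma mu_succ {S : Type*} (G : S → Prop) [DecidablePred G] [DecidableEq S]
    (body : S → PMF S) (n : ℕ) (σ τ : S) :
    mu G body (n + 1) σ τ =
      if G σ then ∑' σ', body σ σ' * mu G body n σ' τ else mu G body 0 σ τ := by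
  simp only [mu]
  split <;> rfl

lemma mu_mono {S : Type*} (G : S → Prop) [DecidablePred G] [DecidableEq S]
    (body : S → PMF S) : ∀ n σ τ, mu G body n σ τ ≤ mu G body (n + 1) σ τ := by
  intro n
  induction n with
  | zero =>
    intro σ τ
    rw [mu_succ]
    by_cases hG : G σ
    · simp [mu_zero, hG]
    · simp [hG]
  | succ n ih =>
    intro σ τ
    rw [mu_succ, mu_succ]
    by_cases hG : G σ
    · simp only [if_pos hG]
      exact ENNReal.tsum_le_tsum fun σ' => mul_le_mul_right (ih σ' τ) _
    · simp [hG]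

lemma mu_monotone {S : Type*} (G : S → Prop) [DecidablePred G] [DecidableEq S]
    (body : S → PMF S) (σ : S) : Monotone (fun n τ => mu G body n σ τ) :=
  monotone_nat_of_le_succ fun n τ => mu_mono G body n σ τ

lemma tsum_mu_zero {S : Type*} (G : S → Prop) [DecidablePred G] [DecidableEq S]
    (body : S → PMF S) (σ : S) (h : ¬ G σ) : ∑' τ, mu G body 0 σ τ = 1 := by
  simp only [mu_zero]
  rw [show (fun τ => if ¬ G σ ∧ τ = σ then (1:ℝ≥0∞) else 0)
      = fun τ => if τ = σ then 1 else 0 by funext τ; simp [h]]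
  simp [tsum_ite_eq]

lemma tsum_mu_succ {S : Type*} (G : S → Prop) [DecidablePred G] [DecidableEq S]
    (body : S → PMF S) (n : ℕ) (σ : S) (h : G σ) :
    ∑' τ, mu G body (n + 1) σ τ = ∑' σ', body σ σ' * ∑' τ, mu G body n σ' τ := by
  simp only [mu_succ, if_pos h]
  rw [ENNReal.tsum_comm (f := fun τ σ' => body σ σ' * mu G body n σ' τ)]
  exact tsum_congr fun σ' => ENNReal.tsum_mul_left

/-- The iterates of `Phi` starting at `⊥` compute the partial termination sums. -/
lemma iterate_eq_tsum_mu {S : Type*} (G : S → Prop) [DecidablePred G] [DecidableEq S]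
    (body : S → PMF S) :
    ∀ n, (Phi G body (fun _ => 1))^[n + 1] ⊥ = fun σ => ∑' τ, mu G body n σ τ := by
  intro n
  induction n with
  | zero =>
    funext σ
    simp only [zero_add, Function.iterate_one, Phi]
    by_cases hG : G σ
    · have : ∑' τ, mu G body 0 σ τ = 0 := by simp [mu_zero, hG]
      simp [hG, this, Pi.bot_apply]
    · rw [if_neg hG, tsum_mu_zero G body σ hG]
  | succ n ih =>
    funext σ
    rw [Function.iterate_succ_apply', ih]
    simp only [Phi]
    by_cases hG : G σ
    · rw [if_pos hG, tsum_mu_succ G body n σ hG]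
    · rw [if_neg hG]
      have : ∑' τ, mu G body (n + 1) σ τ = ∑' τ, mu G body 0 σ τ :=
        tsum_congr fun τ => by rw [mu_succ, if_neg hG]
      rw [this, tsum_mu_zero G body σ hG]

end Aux

/-- the least fixed point with respect to the constant-one
post-expectation computes the loop's termination probability. -/
theorem lfp_one_eq_termination_prob {S : Type*} [Countable S] [DecidableEq S]
    (G : S → Prop) [DecidablePred G] (body : S → PMF S) (σ : S) :
    OrderHom.lfp (PhiHom G body (fun _ => 1)) σ = ∑' τ, W G body σ τ := by
  have hW : ∀ σ', ∑' τ, W G body σ' τ = ⨆ n, ∑' τ, mu G body n σ' τ := by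
    intro σ'
    simp only [W]
    exact tsum_iSup_mono (mu_monotone G body σ')
  apply le_antisymm
  · -- lfp ≤ T since T is a prefixed point
    have hpre : PhiHom G body (fun _ => 1) (fun σ' => ∑' τ, W G body σ' τ)
        ≤ fun σ' => ∑' τ, W G body σ' τ := by
      intro σ'
      simp only [PhiHom, OrderHom.coe_mk, Phi]
      split
      · rename_i hG
        rw [hW σ']
        calc ∑' τ, body σ' τ * ∑' τ', W G body τ τ'
            = ∑' τ, ⨆ n, body σ' τ * ∑' τ', mu G body n τ τ' := by
              refine tsum_congr fun τ => ?_
              rw [hW τ, ENNReal.mul_iSup]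
          _ = ⨆ n, ∑' τ, body σ' τ * ∑' τ', mu G body n τ τ' := by
              refine tsum_iSup_mono ?_
              intro i j hij τ
              exact mul_le_mul_right (ENNReal.tsum_le_tsum fun τ' =>
                mu_monotone G body τ hij τ') _
          _ ≤ ⨆ n, ∑' τ, mu G body n σ' τ := by
              refine iSup_le fun n => le_trans (le_of_eq ?_) (le_iSup _ (n + 1))
              exact (tsum_mu_succ G body n σ' hG).symm
      · rename_i hG
        calc (1:ℝ≥0∞) = ∑' τ, mu G body 0 σ' τ := (tsum_mu_zero G body σ' hG).symm
          _ ≤ ∑' τ, W G body σ' τ := by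
              refine ENNReal.tsum_le_tsum fun τ => ?_
              simp only [W]
              exact le_iSup (fun n => mu G body n σ' τ) 0
    exact OrderHom.lfp_le _ hpre σ
  · -- each partial sum ≤ lfp
    rw [hW σ]
    refine iSup_le fun n => ?_
    have hiter : ∀ m, (Phi G body (fun _ => 1))^[m] ⊥ ≤
        OrderHom.lfp (PhiHom G body (fun _ => 1)) := by
      intro m
      induction m with
      | zero => exact bot_le
      | succ m ih =>
        rw [Function.iterate_succ_apply']
        calc Phi G body (fun _ => 1) ((Phi G body (fun _ => 1))^[m] ⊥)
            ≤ Phi G body (fun _ => 1) (OrderHom.lfp (PhiHom G body (fun _ => 1))) :=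
              Phi_monotone G body _ ih
          _ = OrderHom.lfp (PhiHom G body (fun _ => 1)) :=
              OrderHom.map_lfp (PhiHom G body (fun _ => 1))
    have := hiter (n + 1)
    rw [iterate_eq_tsum_mu G body n] at this
    exact this σ
end
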